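/- arXiv:math/0102198 — 4 statements merged into one kernel-verified Lean document; each statement's English description precedes it below -/
import Mathlib

section
/- Let D = |ξ|⁴ − |ξ|²⟨ξ,η⟩ + ½|ξ|²|η|² − ½⟨ξ,η⟩² − |ξ|³|ξ−η|. Then D = ½(|ξ||ξ−η| + ⟨ξ,η⟩ − |ξ|²)(|ξ|(|ξ−η|−|ξ|) − ⟨ξ,η⟩), and consequently |D| ≤ ½|ξ||η|³ for all ξ, η ∈ ℝ³. -/
open Real

/-- The identity and estimate for
`D = |ξ|⁴ − |ξ|²⟨ξ,η⟩ + ½|ξ|²|η|² − ½⟨ξ,η⟩² − |ξ|³|ξ−η|`: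
`D = ½(|ξ||ξ−η| + ⟨ξ,η⟩ − |ξ|²)(|ξ|(|ξ−η|−|ξ|) − ⟨ξ,η⟩)` and `|D| ≤ ½|ξ||η|³`. -/
theorem stmt3 (ξ η : EuclideanSpace ℝ (Fin 3)) :
    ‖ξ‖ ^ 4 - ‖ξ‖ ^ 2 * (inner ℝ ξ η : ℝ) + ‖ξ‖ ^ 2 * ‖η‖ ^ 2 / 2
        - (inner ℝ ξ η : ℝ) ^ 2 / 2 - ‖ξ‖ ^ 3 * ‖ξ - η‖ =
      (1 / 2) * (‖ξ‖ * ‖ξ - η‖ + (inner ℝ ξ η : ℝ) - ‖ξ‖ ^ 2)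
        * (‖ξ‖ * (‖ξ - η‖ - ‖ξ‖) - (inner ℝ ξ η : ℝ)) ∧
    |‖ξ‖ ^ 4 - ‖ξ‖ ^ 2 * (inner ℝ ξ η : ℝ) + ‖ξ‖ ^ 2 * ‖η‖ ^ 2 / 2
        - (inner ℝ ξ η : ℝ) ^ 2 / 2 - ‖ξ‖ ^ 3 * ‖ξ - η‖| ≤ ‖ξ‖ * ‖η‖ ^ 3 / 2 := by
  set a := ‖ξ‖ with ha
  set b := ‖ξ - η‖ with hbdef
  set n := ‖η‖ with hn
  set t : ℝ := inner ℝ ξ η with htdef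
  have hb : b ^ 2 = a ^ 2 - 2 * t + n ^ 2 := by
    rw [hbdef, ha, hn, htdef]
    exact norm_sub_sq_real ξ η
  have ha0 : (0:ℝ) ≤ a := norm_nonneg _
  have hn0 : (0:ℝ) ≤ n := norm_nonneg _
  have ht : |t| ≤ a * n := abs_real_inner_le_norm ξ η
  have hv : |b - a| ≤ n := by
    have h := abs_norm_sub_norm_le (ξ - η) ξ
    simpa [sub_sub_cancel_left, norm_neg] using h
  constructor
  · linear_combination (-(a ^ 2) / 2) * hb
  · have hD : a^4 - a^2*t + a^2*n^2/2 - t^2/2 - a^3*b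
        = (n^2 - (b-a)^2) * (a*(b-a) - t) / 4 := by
      linear_combination (-(a^2/2) + (a*(b-a) - t)/4) * hb
    have hv' := abs_le.mp hv
    have hv2 : (b - a)^2 ≤ n^2 := by nlinarith [hv'.1, hv'.2]
    have ht' := abs_le.mp ht
    have habs : |a*(b-a) - t| ≤ 2*a*n := by
      rw [abs_le]
      constructor
      · nlinarith [hv'.1, hv'.2, ht'.1, ht'.2]
      · nlinarith [hv'.1, hv'.2, ht'.1, ht'.2]
    have key : |(n^2 - (b-a)^2) * (a*(b-a) - t) / 4| ≤ a * n^3 / 2 := by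
      rw [abs_div, abs_mul]
      have h4 : |(4:ℝ)| = 4 := by norm_num
      rw [h4, abs_of_nonneg (by linarith : (0:ℝ) ≤ n^2 - (b-a)^2)]
      have h1 : (n^2 - (b-a)^2) * |a*(b-a) - t| ≤ n^2 * (2*a*n) := by
        apply mul_le_mul _ habs (abs_nonneg _) (by positivity)
        nlinarith [sq_nonneg (b-a)]
      nlinarith [h1]
    calc |a^4 - a^2*t + a^2*n^2/2 - t^2/2 - a^3*b|
        = |(n^2 - (b-a)^2) * (a*(b-a) - t) / 4| := by rw [hD]
      _ ≤ a * n^3 / 2 := key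
end

section
/- If w : ℝ³ → ℝ³ is a C¹ divergence-free vector field such that both w and x ↦ |x| w(x) are integrable, then for each i ∈ {1,2,3}, ∫_{ℝ³} w_i(x) dx = 0. -/
open Real MeasureTheory Filter Metric

lemma coord_abs_le_norm (x : EuclideanSpace ℝ (Fin 3)) (i : Fin 3) : |x i| ≤ ‖x‖ := by
  have h := abs_real_inner_le_norm (EuclideanSpace.single i (1:ℝ)) x
  simpa [EuclideanSpace.inner_single_left, EuclideanSpace.norm_single] using h

lemma coord_eq_proj (i : Fin 3) :
    (fun x : EuclideanSpace ℝ (Fin 3) => x i) = ⇑(EuclideanSpace.proj (𝕜:=ℝ) i) := rfl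

/-- If `w : ℝ³ → ℝ³` is a `C¹` divergence-free vector field such that both `w`
and `x ↦ |x| w(x)` are integrable, then each component of `w` has zero integral. -/
theorem stmt4 (w : EuclideanSpace ℝ (Fin 3) → EuclideanSpace ℝ (Fin 3))
    (hw : ContDiff ℝ 1 w)
    (hdiv : ∀ x, ∑ i, fderiv ℝ (fun y => w y i) x (EuclideanSpace.single i 1) = 0)
    (hint : Integrable w)
    (hint1 : Integrable (fun x => ‖x‖ * ‖w x‖)) :
    ∀ i : Fin 3, ∫ x, w x i = 0 := by
  intro i
  classical
  have hwj : ∀ j : Fin 3, ContDiff ℝ 1 (fun x : EuclideanSpace ℝ (Fin 3) => w x j) := fun j =>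
    (EuclideanSpace.proj (𝕜 := ℝ) j).contDiff.comp hw
  have hcoordc : ∀ j : Fin 3, ContDiff ℝ 1 (fun x : EuclideanSpace ℝ (Fin 3) => x j) := fun j =>
    (EuclideanSpace.proj (𝕜 := ℝ) j).contDiff
  set u : Fin 3 → EuclideanSpace ℝ (Fin 3) → ℝ := fun j x => x i * w x j with hu
  have huc1 : ∀ j, ContDiff ℝ 1 (u j) := fun j => (hcoordc i).mul (hwj j)
  set e : Fin 3 → EuclideanSpace ℝ (Fin 3) := fun j => EuclideanSpace.single j 1 with he
  -- divergence identity : ∑ j ∂_j (x_i w_j) = w_i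
  have hdivu : ∀ x : EuclideanSpace ℝ (Fin 3), ∑ j, fderiv ℝ (u j) x (e j) = w x i := by
    intro x
    have hstep : ∀ j, fderiv ℝ (u j) x (e j)
        = x i * fderiv ℝ (fun y : EuclideanSpace ℝ (Fin 3) => w y j) x (e j)
          + w x j * (e j i) := by
      intro j
      have hd1 : DifferentiableAt ℝ (fun y : EuclideanSpace ℝ (Fin 3) => y i) x :=
        ((hcoordc i).differentiable one_ne_zero) x
      have hd2 : DifferentiableAt ℝ (fun y : EuclideanSpace ℝ (Fin 3) => w y j) x :=
        ((hwj j).differentiable one_ne_zero) x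
      rw [hu, fderiv_fun_mul hd1 hd2]
      have h3 : fderiv ℝ (fun y : EuclideanSpace ℝ (Fin 3) => y i) x (e j) = e j i := by
        rw [coord_eq_proj, ContinuousLinearMap.fderiv]; rfl
      simp [h3]
    rw [Finset.sum_congr rfl (fun j _ => hstep j)]
    rw [Finset.sum_add_distrib, ← Finset.mul_sum]
    have h4 : ∑ j, w x j * (e j i) = w x i := by
      rw [Finset.sum_eq_single i]
      · simp [he, EuclideanSpace.single_apply]
      · intro j _ hj
        simp [he, EuclideanSpace.single_apply, Ne.symm hj]
      · simp
    rw [hdiv x, h4, mul_zero, zero_add]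
  -- the bump cutoffs
  let φb : ContDiffBump (0 : EuclideanSpace ℝ (Fin 3)) := ⟨1, 2, one_pos, one_lt_two⟩
  set φ : EuclideanSpace ℝ (Fin 3) → ℝ := ⇑φb with hφ
  have hφcs : HasCompactSupport φ := φb.hasCompactSupport
  have hφc1 : ContDiff ℝ 1 φ := φb.contDiff
  obtain ⟨C, hC⟩ := (hφcs.fderiv ℝ).exists_bound_of_continuous (hφc1.continuous_fderiv one_ne_zero)
  set c : ℕ → ℝ := fun n => ((n : ℝ) + 1)⁻¹ with hc
  have hcpos : ∀ n, 0 < c n := fun n => by positivity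
  set L : ℕ → (EuclideanSpace ℝ (Fin 3)) →L[ℝ] (EuclideanSpace ℝ (Fin 3)) :=
    fun n => c n • ContinuousLinearMap.id ℝ _ with hL
  set ψ : ℕ → EuclideanSpace ℝ (Fin 3) → ℝ := fun n x => φ (c n • x) with hψ
  have hψL : ∀ n, ψ n = φ ∘ ⇑(L n) := fun n => rfl
  have hψc1 : ∀ n, ContDiff ℝ 1 (ψ n) := fun n => hφc1.comp (L n).contDiff
  have hψfd : ∀ n x, fderiv ℝ (ψ n) x = (fderiv ℝ φ (c n • x)).comp (L n) := by
    intro n x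
    rw [hψL n, fderiv_comp x ((hφc1.differentiable one_ne_zero).differentiableAt)
      (L n).differentiableAt, (L n).fderiv]
    rfl
  have hψcs : ∀ n, HasCompactSupport (ψ n) := by
    intro n
    refine HasCompactSupport.intro (isCompact_closedBall 0 (2 * ((n:ℝ)+1))) ?_
    intro x hx
    simp only [mem_closedBall, dist_zero_right, not_le] at hx
    have : φ (c n • x) = 0 := by
      rw [← Function.notMem_support, φb.support_eq]
      simp only [mem_ball, dist_zero_right, not_lt, norm_smul, Real.norm_eq_abs,
        abs_of_pos (hcpos n)]
      calc (2:ℝ) = c n * (2 * ((n:ℝ)+1)) := by simp only [hc]; field_simp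
        _ ≤ c n * ‖x‖ := mul_le_mul_of_nonneg_left hx.le (hcpos n).le
    exact this
  have hψbound : ∀ n x (v : EuclideanSpace ℝ (Fin 3)), ‖v‖ = 1 →
      |fderiv ℝ (ψ n) x v| ≤ c n * C := by
    intro n x v hv
    rw [hψfd n x]
    have h5 : (fderiv ℝ φ (c n • x)).comp (L n) v = fderiv ℝ φ (c n • x) (c n • v) := rfl
    rw [h5, (fderiv ℝ φ (c n • x)).map_smul, smul_eq_mul, abs_mul, abs_of_pos (hcpos n)]
    refine mul_le_mul_of_nonneg_left ?_ (hcpos n).le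
    calc |fderiv ℝ φ (c n • x) v| ≤ ‖fderiv ℝ φ (c n • x)‖ * ‖v‖ :=
        (fderiv ℝ φ (c n • x)).le_opNorm v
      _ ≤ C := by rw [hv, mul_one]; exact hC _
  have hψ01 : ∀ n x, 0 ≤ ψ n x ∧ ψ n x ≤ 1 := fun n x => ⟨φb.nonneg, φb.le_one⟩
  have hψtend : ∀ x, ∀ᶠ n in atTop, ψ n x = 1 := by
    intro x
    filter_upwards [eventually_ge_atTop ⌈‖x‖⌉₊] with n hn
    apply φb.one_of_mem_closedBall
    simp only [mem_closedBall, dist_zero_right, norm_smul, Real.norm_eq_abs,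
      abs_of_pos (hcpos n)]
    rw [hc]
    rw [inv_mul_le_iff₀ (by positivity)]
    calc ‖x‖ ≤ (⌈‖x‖⌉₊ : ℝ) := Nat.le_ceil _
      _ ≤ (n:ℝ) := by exact_mod_cast hn
      _ ≤ ((n:ℝ) + 1) * 1 := by linarith
  -- integrability of the products
  have hI1 : ∀ n j, Integrable (fun x => fderiv ℝ (ψ n) x (e j) * u j x) := by
    intro n j
    apply Continuous.integrable_of_hasCompactSupport
    · exact (((hψc1 n).continuous_fderiv one_ne_zero).clm_apply continuous_const).mul
        (huc1 j).continuous
    · exact (((hψcs n).fderiv (𝕜 := ℝ)).comp_left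
        (g := fun T : EuclideanSpace ℝ (Fin 3) →L[ℝ] ℝ => T (e j)) rfl).mul_right
  have hI2 : ∀ n j, Integrable (fun x => ψ n x * fderiv ℝ (u j) x (e j)) := by
    intro n j
    apply Continuous.integrable_of_hasCompactSupport
    · exact (hψc1 n).continuous.mul
        (((huc1 j).continuous_fderiv one_ne_zero).clm_apply continuous_const)
    · exact (hψcs n).mul_right
  have hI3 : ∀ n j, Integrable (fun x => ψ n x * u j x) := by
    intro n j
    apply Continuous.integrable_of_hasCompactSupport
    · exact (hψc1 n).continuous.mul (huc1 j).continuous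
    · exact (hψcs n).mul_right
  -- integration by parts
  have hkey : ∀ n j, ∫ x, ψ n x * fderiv ℝ (u j) x (e j)
      = -∫ x, fderiv ℝ (ψ n) x (e j) * u j x := fun n j =>
    integral_mul_fderiv_eq_neg_fderiv_mul_of_integrable (hI1 n j) (hI2 n j) (hI3 n j)
      (fun x _ => (hψc1 n).differentiable one_ne_zero x) (fun x _ => (huc1 j).differentiable one_ne_zero x)
  set M := ∫ x, ‖x‖ * ‖w x‖ with hM
  have hC0 : 0 ≤ C := le_trans (norm_nonneg _) (hC 0)
  have hM0 : 0 ≤ M := integral_nonneg (fun x => by positivity)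
  set a : ℕ → ℝ := fun n => ∫ x, ψ n x * w x i with ha
  have hsum : ∀ n, a n = ∑ j, ∫ x, ψ n x * fderiv ℝ (u j) x (e j) := by
    intro n
    rw [ha]
    have h6 : ∀ x, ψ n x * w x i = ∑ j, ψ n x * fderiv ℝ (u j) x (e j) := by
      intro x; rw [← Finset.mul_sum, hdivu x]
    simp only [h6]
    exact integral_finset_sum _ (fun j _ => hI2 n j)
  have habound : ∀ n, ‖a n‖ ≤ 3 * (c n * C * M) := by
    intro n
    have hperj : ∀ j, ‖∫ x, ψ n x * fderiv ℝ (u j) x (e j)‖ ≤ c n * C * M := by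
      intro j
      rw [hkey n j, norm_neg]
      have hb : ∀ᵐ x, ‖fderiv ℝ (ψ n) x (e j) * u j x‖ ≤ (c n * C) * (‖x‖ * ‖w x‖) := by
        filter_upwards with x
        rw [Real.norm_eq_abs, abs_mul]
        have h1 : |fderiv ℝ (ψ n) x (e j)| ≤ c n * C :=
          hψbound n x (e j) (by simp [he])
        have h2 : |u j x| ≤ ‖x‖ * ‖w x‖ := by
          rw [hu, abs_mul]
          exact mul_le_mul (coord_abs_le_norm x i) (coord_abs_le_norm (w x) j)
            (abs_nonneg _) (norm_nonneg _)
        exact mul_le_mul h1 h2 (abs_nonneg _) (by positivity)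
      calc ‖∫ x, fderiv ℝ (ψ n) x (e j) * u j x‖
          ≤ ∫ x, (c n * C) * (‖x‖ * ‖w x‖) :=
            norm_integral_le_of_norm_le (hint1.const_mul _) hb
        _ = c n * C * M := by rw [MeasureTheory.integral_const_mul]
    calc ‖a n‖ = ‖∑ j, ∫ x, ψ n x * fderiv ℝ (u j) x (e j)‖ := by rw [hsum n]
      _ ≤ ∑ j, ‖∫ x, ψ n x * fderiv ℝ (u j) x (e j)‖ := norm_sum_le _ _
      _ ≤ ∑ _j : Fin 3, (c n * C * M) := Finset.sum_le_sum (fun j _ => hperj j)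
      _ = 3 * (c n * C * M) := by
          rw [Finset.sum_const, Finset.card_univ, Fintype.card_fin]
          ring
  have hlim1 : Tendsto a atTop (nhds (∫ x, w x i)) := by
    apply tendsto_integral_of_dominated_convergence (fun x => ‖w x‖)
    · exact fun n => ((hψc1 n).continuous.mul (hwj i).continuous).aestronglyMeasurable
    · exact hint.norm
    · intro n
      filter_upwards with x
      rw [Real.norm_eq_abs, abs_mul]
      calc |ψ n x| * |w x i| ≤ 1 * ‖w x‖ :=
          mul_le_mul (by rw [abs_of_nonneg (hψ01 n x).1]; exact (hψ01 n x).2)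
            (coord_abs_le_norm (w x) i) (abs_nonneg _) one_pos.le
        _ = ‖w x‖ := one_mul _
    · filter_upwards with x
      apply Tendsto.congr' _ tendsto_const_nhds
      filter_upwards [hψtend x] with n hn
      rw [hn, one_mul]
  have hlim2 : Tendsto a atTop (nhds 0) := by
    apply squeeze_zero_norm habound
    have h1 : Tendsto (fun n : ℕ => c n) atTop (nhds 0) := by
      simpa only [hc, one_div] using
        (tendsto_one_div_add_atTop_nhds_zero_nat : Tendsto (fun n : ℕ => 1 / ((n:ℝ) + 1)) atTop (nhds 0))
    have h2 := h1.const_mul (3 * C * M)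
    simp only [mul_zero] at h2
    exact h2.congr (fun n => by ring)
  exact tendsto_nhds_unique hlim1 hlim2
end

section
/- Let Λ = Δ + ½ ξ·∇ + 1 be the differential operator on smooth vector fields on ℝ³, let G(ξ) = (4π)^{-3/2} e^{-|ξ|²/4}, and f_i(ξ) = ½(e_i × ξ) G(ξ). Then Λ f_i = − f_i for i = 1,2,3; that is, each f_i is an eigenfunction of Λ with eigenvalue −1. -/
open Real MeasureTheory

/-- Partial derivative in the `i`-th coordinate direction. -/
noncomputable def pd (i : Fin 3) (f : (Fin 3 → ℝ) → ℝ) (x : Fin 3 → ℝ) : ℝ :=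
  fderiv ℝ f x (Pi.single i 1)

/-- The curl of a vector field on `ℝ³`. -/
noncomputable def curl3 (v : (Fin 3 → ℝ) → (Fin 3 → ℝ)) (x : Fin 3 → ℝ) : Fin 3 → ℝ :=
  ![pd 1 (fun y => v y 2) x - pd 2 (fun y => v y 1) x,
    pd 2 (fun y => v y 0) x - pd 0 (fun y => v y 2) x,
    pd 0 (fun y => v y 1) x - pd 1 (fun y => v y 0) x]

/-- The divergence of a vector field on `ℝ³`. -/
noncomputable def div3 (v : (Fin 3 → ℝ) → (Fin 3 → ℝ)) (x : Fin 3 → ℝ) : ℝ :=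
  ∑ i, pd i (fun y => v y i) x

/-- The cross product on `ℝ³`. -/
def cross3 (a b : Fin 3 → ℝ) : Fin 3 → ℝ :=
  ![a 1 * b 2 - a 2 * b 1, a 2 * b 0 - a 0 * b 2, a 0 * b 1 - a 1 * b 0]

/-- The Gaussian `G(ξ) = (4π)^{-3/2} exp(-|ξ|²/4)`. -/
noncomputable def G3 (ξ : Fin 3 → ℝ) : ℝ :=
  (4 * π) ^ (-(3 : ℝ) / 2) * Real.exp (-(∑ i, ξ i ^ 2) / 4)

/-- `p_i(ξ) = ½ (e_i × ξ)`. -/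
noncomputable def pvec (i : Fin 3) (ξ : Fin 3 → ℝ) : Fin 3 → ℝ :=
  (1 / 2 : ℝ) • cross3 (Pi.single i 1) ξ

/-- `f_i = p_i G`. -/
noncomputable def fvec (i : Fin 3) (ξ : Fin 3 → ℝ) : Fin 3 → ℝ := G3 ξ • pvec i ξ

/-- The Laplacian of a scalar function on `ℝ³`. -/
noncomputable def lap3 (f : (Fin 3 → ℝ) → ℝ) (x : Fin 3 → ℝ) : ℝ :=
  ∑ i, pd i (pd i f) x

/-- The operator `Λ = Δ + ½ ξ·∇ + 1` acting on scalar functions. -/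
noncomputable def Lam (f : (Fin 3 → ℝ) → ℝ) (x : Fin 3 → ℝ) : ℝ :=
  lap3 f x + (1 / 2) * ∑ j, x j * pd j f x + f x

/-- The formal adjoint `Λ* = Δ − ½ ξ·∇ − ½` acting on scalar functions. -/
noncomputable def LamStar (f : (Fin 3 → ℝ) → ℝ) (x : Fin 3 → ℝ) : ℝ :=
  lap3 f x - (1 / 2) * ∑ j, x j * pd j f x - (1 / 2) * f x

noncomputable def prj (i : Fin 3) : (Fin 3 → ℝ) →L[ℝ] ℝ := ContinuousLinearMap.proj i

noncomputable def DG (x : Fin 3 → ℝ) : (Fin 3 → ℝ) →L[ℝ] ℝ :=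
  (-(G3 x) / 2) • ∑ i : Fin 3, x i • prj i

lemma hG3 (x : Fin 3 → ℝ) : HasFDerivAt G3 (DG x) x := by
  have h1 : HasFDerivAt (fun y : Fin 3 → ℝ => ∑ i, y i ^ 2) (∑ i : Fin 3, (2 * x i) • prj i) x := by
    apply HasFDerivAt.fun_sum
    intro i _
    have h := ((ContinuousLinearMap.proj i : (Fin 3 → ℝ) →L[ℝ] ℝ).hasFDerivAt (x := x)).fun_mul
      ((ContinuousLinearMap.proj i : (Fin 3 → ℝ) →L[ℝ] ℝ).hasFDerivAt (x := x))
    have e : (fun y : Fin 3 → ℝ => y i ^ 2) = fun y => y i * y i := by funext y; ring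
    rw [e]
    convert! h using 1
    ext v
    simp [prj, two_mul]
    ring_nf
  have h2 := (((h1.const_mul (-(4:ℝ)⁻¹)).exp).const_mul ((4 * π) ^ (-(3:ℝ)/2)))
  have e : G3 = fun y : Fin 3 → ℝ => (4 * π) ^ (-(3:ℝ)/2) * Real.exp (-(4:ℝ)⁻¹ * ∑ i, y i ^ 2) := by
    funext y
    simp only [G3]
    congr 1
    ring_nf
  rw [e]
  convert! h2 using 1
  ext v
  simp [DG, G3, e, prj, ContinuousLinearMap.sum_apply, Fin.sum_univ_three]
  ring_nf

lemma eval_single (x : Fin 3 → ℝ) (j : Fin 3) :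
    (∑ i : Fin 3, x i • prj i) (Pi.single j 1) = x j := by
  simp [prj, ContinuousLinearMap.sum_apply, Pi.single_apply, mul_ite, Finset.sum_ite_eq']

lemma master {P : (Fin 3 → ℝ) → ℝ} {L : (Fin 3 → ℝ) →L[ℝ] ℝ} {x : Fin 3 → ℝ}
    (h : HasFDerivAt P L x) (j : Fin 3) :
    pd j (fun y => P y * G3 y) x = (L (Pi.single j 1) - P x * x j / 2) * G3 x := by
  have hm := h.fun_mul (hG3 x)
  rw [pd, hm.fderiv]
  simp only [DG, ContinuousLinearMap.add_apply, ContinuousLinearMap.smul_apply, smul_eq_mul,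
    eval_single]
  ring

lemma masterL (c : ℝ) (m : Fin 3) (j : Fin 3) (x : Fin 3 → ℝ) :
    pd j (fun y => c * y m * G3 y) x
      = (c * (Pi.single j 1 : Fin 3 → ℝ) m - c * x m * x j / 2) * G3 x := by
  have hP : HasFDerivAt (fun y : Fin 3 → ℝ => c * y m) (c • prj m) x :=
    ((ContinuousLinearMap.proj m : (Fin 3 → ℝ) →L[ℝ] ℝ).hasFDerivAt (x := x)).const_mul c
  rw [master hP j]
  simp [prj]

lemma masterQ (a b : ℝ) (p q : Fin 3) (j : Fin 3) (x : Fin 3 → ℝ) :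
    pd j (fun y => (a + b * (y p * y q)) * G3 y) x
      = ((b * ((Pi.single j 1 : Fin 3 → ℝ) p * x q + x p * (Pi.single j 1 : Fin 3 → ℝ) q))
          - (a + b * (x p * x q)) * x j / 2) * G3 x := by
  have hP : HasFDerivAt (fun y : Fin 3 → ℝ => a + b * (y p * y q))
      (b • (x p • prj q + x q • prj p)) x := by
    have := (((ContinuousLinearMap.proj p : (Fin 3 → ℝ) →L[ℝ] ℝ).hasFDerivAt (x := x)).fun_mul
      ((ContinuousLinearMap.proj q : (Fin 3 → ℝ) →L[ℝ] ℝ).hasFDerivAt (x := x))).const_mul b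
    have h0 := (hasFDerivAt_const a x).fun_add this
    convert! h0 using 1
    ext v
    simp [prj]
  rw [master hP j]
  simp only [ContinuousLinearMap.add_apply, ContinuousLinearMap.smul_apply, smul_eq_mul, prj,
    ContinuousLinearMap.proj_apply]
  ring

lemma main_eig (c : ℝ) (m : Fin 3) (ξ : Fin 3 → ℝ) :
    Lam (fun y => c * y m * G3 y) ξ = -(c * ξ m * G3 ξ) := by
  have e1 : ∀ j : Fin 3, pd j (fun y => c * y m * G3 y)
      = fun x => ((c * (Pi.single j 1 : Fin 3 → ℝ) m) + (-(c/2)) * (x m * x j)) * G3 x := by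
    intro j; funext x; rw [masterL]; ring
  simp only [Lam, lap3, e1, masterQ, masterL]
  rw [Fin.sum_univ_three, Fin.sum_univ_three]
  fin_cases m <;> simp [Pi.single_apply, Fin.sum_univ_three] <;> ring

lemma conv_eig (i k m : Fin 3) (c : ℝ) (h : ∀ y, fvec i y k = c * y m * G3 y) (ξ : Fin 3 → ℝ) :
    Lam (fun y => fvec i y k) ξ = - fvec i ξ k := by
  have e : (fun y => fvec i y k) = fun y => c * y m * G3 y := funext h
  rw [e, main_eig, h]

lemma comp00 (y : Fin 3 → ℝ) : fvec 0 y 0 = (0:ℝ) * y 0 * G3 y := by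
  simp (config := { decide := true }) only [fvec, pvec, cross3, Pi.smul_apply, smul_eq_mul,
    Matrix.cons_val_zero, Matrix.cons_val_one, Matrix.cons_val_two, Matrix.tail_cons,
    Matrix.head_cons, Pi.single_apply, if_true, if_false, reduceIte]
  ring

lemma comp01 (y : Fin 3 → ℝ) : fvec 0 y 1 = (-(1/2):ℝ) * y 2 * G3 y := by
  simp (config := { decide := true }) only [fvec, pvec, cross3, Pi.smul_apply, smul_eq_mul,
    Matrix.cons_val_zero, Matrix.cons_val_one, Matrix.cons_val_two, Matrix.tail_cons,
    Matrix.head_cons, Pi.single_apply, if_true, if_false, reduceIte]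
  ring

lemma comp02 (y : Fin 3 → ℝ) : fvec 0 y 2 = (1/2:ℝ) * y 1 * G3 y := by
  simp (config := { decide := true }) only [fvec, pvec, cross3, Pi.smul_apply, smul_eq_mul,
    Matrix.cons_val_zero, Matrix.cons_val_one, Matrix.cons_val_two, Matrix.tail_cons,
    Matrix.head_cons, Pi.single_apply, if_true, if_false, reduceIte]
  ring

lemma comp10 (y : Fin 3 → ℝ) : fvec 1 y 0 = (1/2:ℝ) * y 2 * G3 y := by
  simp (config := { decide := true }) only [fvec, pvec, cross3, Pi.smul_apply, smul_eq_mul,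
    Matrix.cons_val_zero, Matrix.cons_val_one, Matrix.cons_val_two, Matrix.tail_cons,
    Matrix.head_cons, Pi.single_apply, if_true, if_false, reduceIte]
  ring

lemma comp11 (y : Fin 3 → ℝ) : fvec 1 y 1 = (0:ℝ) * y 0 * G3 y := by
  simp (config := { decide := true }) only [fvec, pvec, cross3, Pi.smul_apply, smul_eq_mul,
    Matrix.cons_val_zero, Matrix.cons_val_one, Matrix.cons_val_two, Matrix.tail_cons,
    Matrix.head_cons, Pi.single_apply, if_true, if_false, reduceIte]
  ring

lemma comp12 (y : Fin 3 → ℝ) : fvec 1 y 2 = (-(1/2):ℝ) * y 0 * G3 y := by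
  simp (config := { decide := true }) only [fvec, pvec, cross3, Pi.smul_apply, smul_eq_mul,
    Matrix.cons_val_zero, Matrix.cons_val_one, Matrix.cons_val_two, Matrix.tail_cons,
    Matrix.head_cons, Pi.single_apply, if_true, if_false, reduceIte]
  ring

lemma comp20 (y : Fin 3 → ℝ) : fvec 2 y 0 = (-(1/2):ℝ) * y 1 * G3 y := by
  simp (config := { decide := true }) only [fvec, pvec, cross3, Pi.smul_apply, smul_eq_mul,
    Matrix.cons_val_zero, Matrix.cons_val_one, Matrix.cons_val_two, Matrix.tail_cons,
    Matrix.head_cons, Pi.single_apply, if_true, if_false, reduceIte]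
  ring

lemma comp21 (y : Fin 3 → ℝ) : fvec 2 y 1 = (1/2:ℝ) * y 0 * G3 y := by
  simp (config := { decide := true }) only [fvec, pvec, cross3, Pi.smul_apply, smul_eq_mul,
    Matrix.cons_val_zero, Matrix.cons_val_one, Matrix.cons_val_two, Matrix.tail_cons,
    Matrix.head_cons, Pi.single_apply, if_true, if_false, reduceIte]
  ring

lemma comp22 (y : Fin 3 → ℝ) : fvec 2 y 2 = (0:ℝ) * y 0 * G3 y := by
  simp (config := { decide := true }) only [fvec, pvec, cross3, Pi.smul_apply, smul_eq_mul,
    Matrix.cons_val_zero, Matrix.cons_val_one, Matrix.cons_val_two, Matrix.tail_cons,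
    Matrix.head_cons, Pi.single_apply, if_true, if_false, reduceIte]
  ring

/-- Each `f_i(ξ) = ½(e_i × ξ) G(ξ)` is an eigenfunction of `Λ = Δ + ½ ξ·∇ + 1`
(acting componentwise) with eigenvalue `−1`: `Λ f_i = −f_i`. -/
theorem stmt9 (i k : Fin 3) (ξ : Fin 3 → ℝ) :
    Lam (fun y => fvec i y k) ξ = - fvec i ξ k := by
  fin_cases i <;> fin_cases k
  · exact conv_eig _ _ _ _ comp00 ξ
  · exact conv_eig _ _ _ _ comp01 ξ
  · exact conv_eig _ _ _ _ comp02 ξ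
  · exact conv_eig _ _ _ _ comp10 ξ
  · exact conv_eig _ _ _ _ comp11 ξ
  · exact conv_eig _ _ _ _ comp12 ξ
  · exact conv_eig _ _ _ _ comp20 ξ
  · exact conv_eig _ _ _ _ comp21 ξ
  · exact conv_eig _ _ _ _ comp22 ξ
end

section
/- Let G(ξ) = (4π)^{-3/2} e^{-|ξ|²/4}, f_i(ξ) = ½(e_i × ξ)G(ξ), and g_i = curl f_i. Then g_i(ξ) = (G(ξ)/4)((4−|ξ|²)e_i + ξ_i ξ), and Λ g_i = −(3/2) g_i where Λ = Δ + ½ξ·∇ + 1. -/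
open Real MeasureTheory

section toolkit
variable {f g : (Fin 3 → ℝ) → ℝ} {j : Fin 3}

lemma pd_add (hf : Differentiable ℝ f) (hg : Differentiable ℝ g) :
    pd j (fun y => f y + g y) = fun x => pd j f x + pd j g x := by
  funext x; simp [pd, fderiv_fun_add (hf x) (hg x)]

lemma pd_sub (hf : Differentiable ℝ f) (hg : Differentiable ℝ g) :
    pd j (fun y => f y - g y) = fun x => pd j f x - pd j g x := by
  funext x; simp [pd, fderiv_fun_sub (hf x) (hg x)]

lemma pd_mul (hf : Differentiable ℝ f) (hg : Differentiable ℝ g) :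
    pd j (fun y => f y * g y) = fun x => f x * pd j g x + g x * pd j f x := by
  funext x; simp [pd, fderiv_fun_mul (hf x) (hg x)]

lemma pd_exp (hf : Differentiable ℝ f) :
    pd j (fun y => Real.exp (f y)) = fun x => Real.exp (f x) * pd j f x := by
  funext x; simp [pd, ((hf x).hasFDerivAt.exp).fderiv]

lemma pd_neg : pd j (fun y => -f y) = fun x => -pd j f x := by
  funext x; simp [pd, fderiv_neg]

lemma pd_div_const (hf : Differentiable ℝ f) (c : ℝ) :
    pd j (fun y => f y / c) = fun x => pd j f x / c := by
  funext x; simp [pd, div_eq_mul_inv, fderiv_mul_const (hf x), mul_comm]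

lemma pd_const (c : ℝ) : pd j (fun _ => c) = fun _ => 0 := by
  funext x; simp [pd]

lemma pd_coord (m : Fin 3) :
    pd j (fun y : Fin 3 → ℝ => y m) = fun _ => if m = j then 1 else 0 := by
  funext x
  have h : (fun y : Fin 3 → ℝ => y m)
      = (ContinuousLinearMap.proj m : (Fin 3 → ℝ) →L[ℝ] ℝ) := rfl
  simp [pd, h, ContinuousLinearMap.fderiv, Pi.single_apply]

lemma pd_sq (hf : Differentiable ℝ f) :
    pd j (fun y => f y ^ 2) = fun x => 2 * f x * pd j f x := by
  have h : (fun y => f y ^ 2) = fun y => f y * f y := by funext y; ring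
  rw [h, pd_mul hf hf]; funext x; ring

end toolkit

/-- The exponential part of the Gaussian. -/
noncomputable def Ee (y : Fin 3 → ℝ) : ℝ := Real.exp (-(y 0 ^ 2 + y 1 ^ 2 + y 2 ^ 2) / 4)

@[fun_prop] lemma diff_Ee : Differentiable ℝ Ee := by unfold Ee; fun_prop

lemma pd_Ee (j : Fin 3) : pd j Ee = fun x => -(x j) / 2 * Ee x := by
  have h : Ee = fun y => Real.exp (-(y 0 ^ 2 + y 1 ^ 2 + y 2 ^ 2) / 4) := rfl
  rw [h]
  simp (disch := fun_prop) only [pd_exp, pd_div_const, pd_neg, pd_add, pd_sq, pd_coord]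
  funext x
  fin_cases j <;> simp [Ee] <;> ring

lemma G3_eq : G3 = fun y => (4 * π) ^ (-(3 : ℝ) / 2) * Ee y := by
  funext y; rw [G3, Ee, Fin.sum_univ_three]

set_option maxHeartbeats 4000000 in
/-- For `g_i = curl f_i` one has `g_i(ξ) = (G(ξ)/4)((4−|ξ|²)e_i + ξ_i ξ)` and
`Λ g_i = −(3/2) g_i`, where `Λ = Δ + ½ ξ·∇ + 1` acts componentwise. -/
theorem stmt12 (i : Fin 3) (ξ : Fin 3 → ℝ) :
    curl3 (fvec i) ξ =
      (G3 ξ / 4) • ((4 - ∑ k, ξ k ^ 2) • (Pi.single i 1 : Fin 3 → ℝ) + ξ i • ξ) ∧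
    (∀ k : Fin 3, Lam (fun y => curl3 (fvec i) y k) ξ = -(3 / 2) * curl3 (fvec i) ξ k) := by
  have key : ∀ x : Fin 3 → ℝ, curl3 (fvec i) x =
      (G3 x / 4) • ((4 - ∑ k, x k ^ 2) • (Pi.single i 1 : Fin 3 → ℝ) + x i • x) := by
    intro x
    funext k
    fin_cases i <;> fin_cases k <;>
    · simp [curl3, fvec, pvec, cross3, G3_eq, Fin.sum_univ_three, Pi.single_apply]
      simp (disch := fun_prop) [pd_mul, pd_Ee, pd_div_const, pd_neg, pd_add, pd_sub,
        pd_sq, pd_coord, pd_const]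
      ring
  refine ⟨key ξ, ?_⟩
  intro k
  have hk : ∀ y : Fin 3 → ℝ, curl3 (fvec i) y k
      = (4 * π) ^ (-(3 : ℝ) / 2) * Ee y * ((4 - (y 0 ^ 2 + y 1 ^ 2 + y 2 ^ 2))
          * (Pi.single i 1 : Fin 3 → ℝ) k + y i * y k) / 4 := by
    intro y
    rw [key y]
    simp [G3_eq, Fin.sum_univ_three]
    ring
  have hfun : (fun y => curl3 (fvec i) y k)
      = fun y => (4 * π) ^ (-(3 : ℝ) / 2) * Ee y * ((4 - (y 0 ^ 2 + y 1 ^ 2 + y 2 ^ 2))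
          * (Pi.single i 1 : Fin 3 → ℝ) k + y i * y k) / 4 := funext hk
  rw [hfun, hk ξ]
  fin_cases i <;> fin_cases k <;>
  · simp only [Lam, lap3, Fin.sum_univ_three]
    simp (disch := fun_prop) [pd_mul, pd_Ee, pd_div_const, pd_neg, pd_add, pd_sub,
      pd_sq, pd_coord, pd_const, Pi.single_apply]
    ring
end
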